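/- For all i, j ∈ {1,…,4}, the vertical Ricci d-tensor S_{(1)(1)}^{(i)(j)} := Σ_{m=1}^{4} [ ∂C_{m(1)}^{i(j)}/∂p_m − ∂C_{m(1)}^{i(m)}/∂p_j ] + Σ_{m,r=1}^{4} [ C_{m(1)}^{r(j)} C_{r(1)}^{i(m)} − C_{m(1)}^{r(m)} C_{r(1)}^{i(j)} ] equals (1 − 4δ^{ij})/(8 p_i p_j); consequently R_{(1)(1)}^{(i)(j)} := −S_{(1)(1)}^{(i)(j)} = (4δ^{ij} − 1)/(8 p_i p_j). -/

import Mathlib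

/-- Partial derivative of `f : (Fin 4 → ℝ) → ℝ` with respect to the `i`-th coordinate. -/
noncomputable def pd (f : (Fin 4 → ℝ) → ℝ) (i : Fin 4) (v : Fin 4 → ℝ) : ℝ :=
  deriv (fun s => f (Function.update v i s)) (v i)

/-- Kronecker delta. -/
noncomputable def kron (i j : Fin 4) : ℝ := if i = j then 1 else 0

/-- `𝖢_i^{jk} = (1 − 2δ^{jk} − 2δ^j_i − 2δ^k_i + 8δ^j_i δ^k_i)/8`. -/
noncomputable def CC (i j k : Fin 4) : ℝ :=
  (1 - 2 * kron j k - 2 * kron i j - 2 * kron i k + 8 * kron i j * kron i k) / 8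

/-- The vertical d-tensor `C_{i(1)}^{j(k)} = 𝖢_i^{jk} p_i/(p_j p_k)`. -/
noncomputable def Cv (p : Fin 4 → ℝ) (i j k : Fin 4) : ℝ :=
  CC i j k * p i / (p j * p k)

/-- The vertical Ricci d-tensor
`S_{(1)(1)}^{(i)(j)} = Σ_m [∂C_{m(1)}^{i(j)}/∂p_m − ∂C_{m(1)}^{i(m)}/∂p_j]
+ Σ_{m,r} [C_{m(1)}^{r(j)} C_{r(1)}^{i(m)} − C_{m(1)}^{r(m)} C_{r(1)}^{i(j)}]`. -/
noncomputable def Sv (p : Fin 4 → ℝ) (i j : Fin 4) : ℝ :=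
  (∑ m, (pd (fun p' => Cv p' m i j) m p - pd (fun p' => Cv p' m i m) j p))
    + ∑ m, ∑ r, (Cv p m r j * Cv p r i m - Cv p m r m * Cv p r i j)

lemma hasDerivAt_updateCoord (p : Fin 4 → ℝ) (k a : Fin 4) :
    HasDerivAt (fun s => Function.update p k s a) (kron k a) (p k) := by
  simp only [Function.update_apply, kron]
  by_cases h : a = k
  · subst h; simpa using hasDerivAt_id' (p a)
  · simp only [h, if_false, Ne.symm h, if_false]
    exact hasDerivAt_const _ _

lemma pd_Cv (p : Fin 4 → ℝ) (hp : ∀ a, p a ≠ 0) (m i j k : Fin 4) :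
    pd (fun p' => Cv p' m i j) k p
      = (CC m i j * kron k m * (p i * p j)
          - CC m i j * p m * (kron k i * p j + p i * kron k j)) / (p i * p j) ^ 2 := by
  have hnum : HasDerivAt (fun s => CC m i j * Function.update p k s m)
      (CC m i j * kron k m) (p k) := (hasDerivAt_updateCoord p k m).const_mul _
  have hden : HasDerivAt (fun s => Function.update p k s i * Function.update p k s j)
      (kron k i * p j + p i * kron k j) (p k) := by
    have := (hasDerivAt_updateCoord p k i).mul (hasDerivAt_updateCoord p k j)
    simpa [Pi.mul_def] using this
  have hden0 : Function.update p k (p k) i * Function.update p k (p k) j ≠ 0 := by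
    simp [mul_ne_zero (hp i) (hp j)]
  have h := (hnum.div hden hden0)
  unfold pd Cv
  have := h.deriv
  simpa [Pi.div_def] using this

set_option maxHeartbeats 0 in
/-- `S_{(1)(1)}^{(i)(j)} = (1 − 4δ^{ij})/(8 p_i p_j)`; consequently
`R_{(1)(1)}^{(i)(j)} = −S_{(1)(1)}^{(i)(j)} = (4δ^{ij} − 1)/(8 p_i p_j)`. -/
theorem stmt_10 (p : Fin 4 → ℝ) (hp : ∀ i, 0 < p i) (i j : Fin 4) :
    Sv p i j = (1 - 4 * kron i j) / (8 * p i * p j)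
    ∧ -Sv p i j = (4 * kron i j - 1) / (8 * p i * p j) := by
  have hp' : ∀ a, p a ≠ 0 := fun a => (hp a).ne'
  have key : Sv p i j = (1 - 4 * kron i j) / (8 * p i * p j) := by
    unfold Sv
    simp only [pd_Cv p hp', Fin.sum_univ_four]
    have h0 := hp' 0; have h1 := hp' 1; have h2 := hp' 2; have h3 := hp' 3
    have hi : i = 0 ∨ i = 1 ∨ i = 2 ∨ i = 3 := by omega
    have hj : j = 0 ∨ j = 1 ∨ j = 2 ∨ j = 3 := by omega
    rcases hi with rfl | rfl | rfl | rfl <;> rcases hj with rfl | rfl | rfl | rfl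
    all_goals
      simp only [Cv, CC, kron, Fin.reduceEq, reduceIte, if_true]
      norm_num
      field_simp
      ring
  refine ⟨key, ?_⟩
  rw [key]; ring
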